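/- Let (ψ_k) be a monotonically decreasing sequence of positive real numbers converging to 0, let β > 0 and q ∈ (1/2, 1), and assume ψ_k − ψ_{k+1} ≥ β·ψ_{k+1}^{2q} for all k ∈ ℕ. Then there exist η > 0 and K ∈ ℕ such that ψ_k ≤ η · k^{−1/(2q−1)} for all k ≥ K. -/

import Mathlib

open Filter Topology

/-- Concavity interpolation: for `0 < α < 1`, `0 ≤ t ≤ T`,
`1 + (t/T) * ((1+T)^α - 1) ≤ (1+t)^α`. -/
lemma rpow_interp_lower {α T t : ℝ} (hα0 : 0 < α) (hα1 : α < 1)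
    (hT : 0 < T) (ht0 : 0 ≤ t) (htT : t ≤ T) :
    1 + (t / T) * ((1 + T) ^ α - 1) ≤ (1 + t) ^ α := by
  have hcc := (Real.concaveOn_rpow hα0.le hα1.le).2
    (Set.mem_Ici.mpr (by norm_num : (0:ℝ) ≤ 1))
    (Set.mem_Ici.mpr (by linarith : (0:ℝ) ≤ 1 + T))
    (show (0:ℝ) ≤ 1 - t / T by
      have h := (div_le_one hT).mpr htT; linarith)
    (show (0:ℝ) ≤ t / T by positivity)
    (show (1 - t / T) + t / T = 1 by ring)
  have h1 : (1 - t / T) • (1:ℝ) + (t / T) • (1 + T) = 1 + t := by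
    field_simp
    rw [smul_eq_mul, smul_eq_mul]; field_simp; ring
  rw [h1] at hcc
  have h2 : (1:ℝ) ^ α = 1 := Real.one_rpow α
  calc 1 + (t / T) * ((1 + T) ^ α - 1)
      = (1 - t / T) • ((1:ℝ) ^ α) + (t / T) • ((1 + T) ^ α) := by
        rw [h2]; simp [smul_eq_mul]; ring
    _ ≤ (1 + t) ^ α := hcc

/-- The abstract sequence argument behind the sublinear rate in
Theorem 3.3(iv). -/
theorem sublinear_rate_high_exponent_recursion
    (ψ : ℕ → ℝ) (hpos : ∀ k, 0 < ψ k)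
    (hdec : ∀ k, ψ (k + 1) ≤ ψ k)
    (hconv : Tendsto ψ atTop (𝓝 0))
    (β : ℝ) (hβ : 0 < β)
    (q : ℝ) (hq : q ∈ Set.Ioo (1/2 : ℝ) 1)
    (hrec : ∀ k : ℕ, ψ k - ψ (k + 1) ≥ β * (ψ (k + 1)) ^ (2 * q)) :
    ∃ η > (0 : ℝ), ∃ K : ℕ, ∀ k ≥ K, ψ k ≤ η * (k : ℝ) ^ (-(1 / (2 * q - 1))) := by
  obtain ⟨hq1, hq2⟩ := hq
  set α : ℝ := 2 * q - 1 with hαdef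
  have hα0 : 0 < α := by simp [hαdef]; linarith
  have hα1 : α < 1 := by simp [hαdef]; linarith
  -- ψ is bounded by ψ 0
  have hmono : ∀ k, ψ k ≤ ψ 0 := by
    intro k
    induction k with
    | zero => exact le_refl _
    | succ n ih => exact (hdec n).trans ih
  set T : ℝ := β * ψ 0 ^ α with hTdef
  have hT : 0 < T := by
    have := hpos 0
    positivity
  have hD : 0 < (1 + T) ^ α - 1 := by
    have : (1:ℝ) < (1 + T) ^ α :=
      Real.one_lt_rpow_iff_of_pos (by linarith) |>.mpr (Or.inl ⟨by linarith, hα0⟩)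
    linarith
  set c : ℝ := β * ((1 + T) ^ α - 1) / (T * (1 + T)) with hcdef
  have hc : 0 < c := by positivity
  -- key one-step estimate
  have key : ∀ k, ψ k ^ (-α) + c ≤ ψ (k + 1) ^ (-α) := by
    intro k
    set a : ℝ := ψ (k + 1) with hadef
    set b : ℝ := ψ k with hbdef
    have ha : 0 < a := hpos (k + 1)
    have hb : 0 < b := hpos k
    set t : ℝ := β * a ^ α with htdef
    have ht0 : 0 ≤ t := by positivity
    have htT : t ≤ T := by
      have h := Real.rpow_le_rpow ha.le (hmono (k + 1)) hα0.le
      exact mul_le_mul_of_nonneg_left h hβ.le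
    -- b ≥ a * (1 + t)
    have hab : a * (1 + t) ≤ b := by
      have h2q : a ^ (2 * q) = a * a ^ α := by
        have : (2 : ℝ) * q = 1 + α := by rw [hαdef]; ring
        rw [this, Real.rpow_add ha, Real.rpow_one]
      have := hrec k
      rw [h2q] at this
      have : a + β * (a * a ^ α) ≤ b := by linarith [this]
      calc a * (1 + t) = a + β * (a * a ^ α) := by rw [htdef]; ring
        _ ≤ b := this
    have h1t : (0:ℝ) < 1 + t := by linarith
    have hB : b ^ (-α) ≤ a ^ (-α) * (1 + t) ^ (-α) := by
      have h := Real.rpow_le_rpow_of_nonpos (by positivity) hab (by linarith : -α ≤ 0)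
      rwa [Real.mul_rpow ha.le h1t.le] at h
    set s : ℝ := (t / T) * ((1 + T) ^ α - 1) with hsdef
    have hs0 : 0 ≤ s := by positivity
    have hsT : s ≤ T := by
      have h1 : (1 + T) ^ α ≤ 1 + T := by
        calc (1 + T) ^ α ≤ (1 + T) ^ (1:ℝ) :=
              Real.rpow_le_rpow_of_exponent_le (by linarith) hα1.le
          _ = 1 + T := Real.rpow_one _
      have h2 : t / T ≤ 1 := (div_le_one hT).mpr htT
      calc s ≤ 1 * ((1 + T) ^ α - 1) := by
            apply mul_le_mul_of_nonneg_right h2 (by linarith)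
        _ = (1 + T) ^ α - 1 := by ring
        _ ≤ T := by linarith
    have hinterp : 1 + s ≤ (1 + t) ^ α := rpow_interp_lower hα0 hα1 hT ht0 htT
    have h1s : (0:ℝ) < 1 + s := by linarith
    have hinv : (1 + t) ^ (-α) ≤ (1 + s)⁻¹ := by
      rw [Real.rpow_neg h1t.le]
      exact inv_anti₀ h1s hinterp
    set A : ℝ := a ^ (-α) with hAdef
    have hA : 0 < A := Real.rpow_pos_of_pos ha _
    have hB2 : b ^ (-α) * (1 + s) ≤ A := by
      have : b ^ (-α) ≤ A * (1 + s)⁻¹ := by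
        calc b ^ (-α) ≤ A * (1 + t) ^ (-α) := hB
          _ ≤ A * (1 + s)⁻¹ := mul_le_mul_of_nonneg_left hinv hA.le
      calc b ^ (-α) * (1 + s) ≤ A * (1 + s)⁻¹ * (1 + s) :=
            mul_le_mul_of_nonneg_right this h1s.le
        _ = A := by field_simp
    have hAt : A * t = β := by
      rw [hAdef, htdef]
      rw [mul_comm β, ← mul_assoc, ← Real.rpow_add ha]
      simp
    have hcT : c * (T * (1 + T)) = β * ((1 + T) ^ α - 1) := by
      rw [hcdef]; field_simp
    have hAsT : A * s * T = β * ((1 + T) ^ α - 1) := by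
      rw [hsdef,
        show A * (t / T * ((1 + T) ^ α - 1)) * T
            = A * t * ((1 + T) ^ α - 1) * (T / T) from by ring,
        div_self hT.ne', hAt]
      ring
    have h4 : c * (1 + s) ≤ A * s := by
      have h4' : c * (1 + s) * T ≤ A * s * T := by nlinarith [mul_pos hc hT]
      exact le_of_mul_le_mul_right h4' hT
    have h7 : (b ^ (-α) + c) * (1 + s) ≤ A * (1 + s) := by nlinarith
    exact le_of_mul_le_mul_right h7 h1s
  -- iterate
  have hlow : ∀ k : ℕ, ψ 0 ^ (-α) + c * k ≤ ψ k ^ (-α) := by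
    intro k
    induction k with
    | zero => simp
    | succ n ih =>
      have := key n
      push_cast
      push_cast at ih
      linarith
  have hψ0 : 0 < ψ 0 ^ (-α) := Real.rpow_pos_of_pos (hpos 0) _
  refine ⟨c ^ (-(1 / α)), Real.rpow_pos_of_pos hc _, 1, fun k hk => ?_⟩
  have hk1 : (1:ℝ) ≤ (k:ℝ) := by exact_mod_cast hk
  have hck : 0 < c * (k:ℝ) := by positivity
  have hlk : c * (k:ℝ) ≤ ψ k ^ (-α) := by
    have := hlow k
    linarith
  have hmain : (ψ k ^ (-α)) ^ (-(1 / α)) ≤ (c * (k:ℝ)) ^ (-(1 / α)) :=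
    Real.rpow_le_rpow_of_nonpos hck hlk (neg_nonpos.mpr (by positivity))
  have hL : (ψ k ^ (-α)) ^ (-(1 / α)) = ψ k := by
    rw [← Real.rpow_mul (hpos k).le]
    rw [show -α * -(1 / α) = 1 from by field_simp, Real.rpow_one]
  have hR : (c * (k:ℝ)) ^ (-(1 / α)) = c ^ (-(1 / α)) * (k:ℝ) ^ (-(1 / α)) :=
    Real.mul_rpow hc.le (by positivity)
  rw [hL, hR] at hmain
  exact hmain
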